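/- The split-octonion algebra O over a field F is the disjoint union of the Aut(O)-orbits of the elements α·1 (for α ∈ F) and of the orbits O(α,β) = Aut(O)·c(α,β) (for α, β ∈ F); that is, every element of O lies in the orbit of exactly one element of the list {α·1 : α ∈ F} ∪ {c(α,β) : α,β ∈ F}, and distinct elements of this list lie in distinct orbits. -/

import Mathlib

@[ext]
structure Zorn (F : Type*) where
  x1 : F
  u : Fin 3 → F
  v : Fin 3 → F
  x2 : F

namespace Zorn

variable {F : Type*} [Field F]

/-- Dot product on `F³`. -/
def dot (x y : Fin 3 → F) : F := x 0 * y 0 + x 1 * y 1 + x 2 * y 2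

/-- Cross product on `F³`. -/
def cross (x y : Fin 3 → F) : Fin 3 → F :=
  ![x 1 * y 2 - x 2 * y 1, x 2 * y 0 - x 0 * y 2, x 0 * y 1 - x 1 * y 0]

instance : Add (Zorn F) :=
  ⟨fun a b => ⟨a.x1 + b.x1, a.u + b.u, a.v + b.v, a.x2 + b.x2⟩⟩

instance : Zero (Zorn F) := ⟨⟨0, 0, 0, 0⟩⟩

instance : Neg (Zorn F) := ⟨fun a => ⟨-a.x1, -a.u, -a.v, -a.x2⟩⟩

instance : Sub (Zorn F) :=
  ⟨fun a b => ⟨a.x1 - b.x1, a.u - b.u, a.v - b.v, a.x2 - b.x2⟩⟩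

instance : SMul F (Zorn F) :=
  ⟨fun c a => ⟨c * a.x1, c • a.u, c • a.v, c * a.x2⟩⟩

/-- Zorn vector-matrix multiplication. -/
instance : Mul (Zorn F) :=
  ⟨fun a b =>
    ⟨a.x1 * b.x1 + dot a.u b.v,
     a.x1 • b.u + b.x2 • a.u - cross a.v b.v,
     b.x1 • a.v + a.x2 • b.v + cross a.u b.u,
     a.x2 * b.x2 + dot a.v b.u⟩⟩

instance : One (Zorn F) := ⟨⟨1, 0, 0, 1⟩⟩

@[simp] lemma add_def (a b : Zorn F) :
    a + b = ⟨a.x1 + b.x1, a.u + b.u, a.v + b.v, a.x2 + b.x2⟩ := rfl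
@[simp] lemma zero_def : (0 : Zorn F) = ⟨0, 0, 0, 0⟩ := rfl
@[simp] lemma neg_def (a : Zorn F) : -a = ⟨-a.x1, -a.u, -a.v, -a.x2⟩ := rfl
@[simp] lemma sub_def (a b : Zorn F) :
    a - b = ⟨a.x1 - b.x1, a.u - b.u, a.v - b.v, a.x2 - b.x2⟩ := rfl
@[simp] lemma smul_def (c : F) (a : Zorn F) :
    c • a = ⟨c * a.x1, c • a.u, c • a.v, c * a.x2⟩ := rfl

instance : AddCommGroup (Zorn F) where
  add_assoc a b c := by ext <;> simp [add_assoc]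
  zero_add a := by ext <;> simp
  add_zero a := by ext <;> simp
  add_comm a b := by ext <;> simp [add_comm]
  neg_add_cancel a := by ext <;> simp
  sub_eq_add_neg a b := by ext <;> simp [sub_eq_add_neg]
  nsmul := nsmulRec
  zsmul := zsmulRec

instance : Module F (Zorn F) where
  one_smul a := by ext <;> simp
  mul_smul c d a := by ext <;> simp [mul_assoc, mul_smul]
  smul_zero c := by ext <;> simp
  smul_add c a b := by ext <;> simp [mul_add]
  add_smul c d a := by ext <;> simp [add_mul, add_smul]
  zero_smul a := by ext <;> simp

/-- The trace of a split octonion. -/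
def trace (a : Zorn F) : F := a.x1 + a.x2

/-- The norm of a split octonion. -/
def norm (a : Zorn F) : F := a.x1 * a.x2 - dot a.u a.v

/-- The conjugate of a split octonion. -/
def conj (a : Zorn F) : Zorn F := ⟨a.x2, -a.u, -a.v, a.x1⟩

end Zorn

namespace Zorn

variable {F : Type*} [Field F]

/-- Iterated powers of a split octonion (well defined by power-associativity). -/
def pow (a : Zorn F) : ℕ → Zorn F
  | 0 => 1
  | n + 1 => a * pow a n

/-- `P y z n` is the generalized Fibonacci polynomial `p_{n-1}(y,z)`:
`p_{-1} = 0`, `p_0 = 1`, `p_{k+1} = y p_k + z p_{k-1}`. -/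
def P (y z : F) : ℕ → F
  | 0 => 0
  | 1 => 1
  | n + 2 => y * P y z (n + 1) + z * P y z n

/-- `f̂(y,z) = Σ_{k=1}^n α_k p_{k-1}(y,z)`. -/
def fHat (n : ℕ) (α : ℕ → F) (y z : F) : F := ∑ k ∈ Finset.Icc 1 n, α k * P y z k

/-- `f̌(y,z) = Σ_{k=1}^n α_k p_{k-2}(y,z)`. -/
def fCheck (n : ℕ) (α : ℕ → F) (y z : F) : F := ∑ k ∈ Finset.Icc 1 n, α k * P y z (k - 1)

/-- `f(x) = Σ_{k=1}^n α_k x^k` for `x` in the split octonions. -/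
def fOct (n : ℕ) (α : ℕ → F) (x : Zorn F) : Zorn F := ∑ k ∈ Finset.Icc 1 n, α k • pow x k

/-- `f(ν) = Σ_{k=1}^n α_k ν^k` for `ν ∈ F`. -/
def fScalar (n : ℕ) (α : ℕ → F) (y : F) : F := ∑ k ∈ Finset.Icc 1 n, α k * y ^ k

/-- `g : O → O` is an `F`-algebra automorphism of the split octonions. -/
def IsAlgAut (g : Zorn F → Zorn F) : Prop :=
  Function.Bijective g ∧ (∀ a b, g (a + b) = g a + g b) ∧
    (∀ (c : F) (a : Zorn F), g (c • a) = c • g a) ∧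
    (∀ a b, g (a * b) = g a * g b) ∧ g 1 = 1

/-- The `Aut(O)`-orbit of a split octonion. -/
def orbit (a : Zorn F) : Set (Zorn F) := {x | ∃ g, IsAlgAut g ∧ g a = x}

/-- The canonical octonion `c(α,β)`. -/
def cmat (α β : F) : Zorn F := ⟨α, ![β, 0, 0], ![1, 0, 0], 0⟩

end Zorn

namespace Zorn

variable {F : Type*} [Field F]

lemma mul_def (a b : Zorn F) : a * b =
    ⟨a.x1 * b.x1 + dot a.u b.v,
     a.x1 • b.u + b.x2 • a.u - cross a.v b.v,
     b.x1 • a.v + a.x2 • b.v + cross a.u b.u,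
     a.x2 * b.x2 + dot a.v b.u⟩ := rfl

lemma one_def : (1 : Zorn F) = ⟨1, 0, 0, 1⟩ := rfl

@[simp] lemma vec3_0 (p q r : F) : ![p, q, r] 0 = p := rfl
@[simp] lemma vec3_1 (p q r : F) : ![p, q, r] 1 = q := rfl
@[simp] lemma vec3_2 (p q r : F) : ![p, q, r] 2 = r := rfl

lemma funext3 {f g : Fin 3 → F} (h0 : f 0 = g 0) (h1 : f 1 = g 1) (h2 : f 2 = g 2) :
    f = g := by
  funext i; fin_cases i <;> assumption

lemma ext' {x y : Zorn F} (h1 : x.x1 = y.x1)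
    (hu0 : x.u 0 = y.u 0) (hu1 : x.u 1 = y.u 1) (hu2 : x.u 2 = y.u 2)
    (hv0 : x.v 0 = y.v 0) (hv1 : x.v 1 = y.v 1) (hv2 : x.v 2 = y.v 2)
    (h2 : x.x2 = y.x2) : x = y :=
  Zorn.ext h1 (funext3 hu0 hu1 hu2) (funext3 hv0 hv1 hv2) h2

end Zorn

namespace Zorn

variable {F : Type*} [Field F]
set_option maxHeartbeats 1000000

/-- The `SL₃`-type automorphism attached to a matrix with rows `a, b, c` of determinant 1. -/
def tau (a b c : Fin 3 → F) (x : Zorn F) : Zorn F :=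
  ⟨x.x1, ![dot a x.u, dot b x.u, dot c x.u],
   ![dot (cross b c) x.v, dot (cross c a) x.v, dot (cross a b) x.v], x.x2⟩

def tauInv (a b c : Fin 3 → F) (x : Zorn F) : Zorn F :=
  ⟨x.x1,
   fun i => cross b c i * x.u 0 + cross c a i * x.u 1 + cross a b i * x.u 2,
   fun i => a i * x.v 0 + b i * x.v 1 + c i * x.v 2,
   x.x2⟩

lemma isAlgAut_tau (a b c : Fin 3 → F) (h : dot a (cross b c) = 1) :
    IsAlgAut (tau a b c) := by
  simp only [dot, cross, vec3_0, vec3_1, vec3_2] at h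
  refine ⟨Function.bijective_iff_has_inverse.mpr
      ⟨tauInv a b c, fun x => ?_, fun x => ?_⟩, fun x y => ?_, fun r x => ?_,
      fun x y => ?_, ?_⟩
  · apply ext' <;> simp [tau, tauInv, dot, cross]
    · linear_combination (x.u 0) * h
    · linear_combination (x.u 1) * h
    · linear_combination (x.u 2) * h
    · linear_combination (x.v 0) * h
    · linear_combination (x.v 1) * h
    · linear_combination (x.v 2) * h
  · apply ext' <;> simp [tau, tauInv, dot, cross]
    · linear_combination (x.u 0) * h
    · linear_combination (x.u 1) * h
    · linear_combination (x.u 2) * h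
    · linear_combination (x.v 0) * h
    · linear_combination (x.v 1) * h
    · linear_combination (x.v 2) * h
  · apply ext' <;> simp [tau, add_def, dot, cross] <;> ring
  · apply ext' <;> simp [tau, smul_def, dot, cross] <;> ring
  · apply ext' <;> simp only [tau, mul_def, dot, cross, vec3_0, vec3_1, vec3_2,
      Pi.add_apply, Pi.sub_apply, Pi.smul_apply, smul_eq_mul]
    · linear_combination (-(x.u 0 * y.v 0 + x.u 1 * y.v 1 + x.u 2 * y.v 2)) * h
    · linear_combination (a 0 * (x.v 1 * y.v 2 - x.v 2 * y.v 1) +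
        a 1 * (x.v 2 * y.v 0 - x.v 0 * y.v 2) + a 2 * (x.v 0 * y.v 1 - x.v 1 * y.v 0)) * h
    · linear_combination (b 0 * (x.v 1 * y.v 2 - x.v 2 * y.v 1) +
        b 1 * (x.v 2 * y.v 0 - x.v 0 * y.v 2) + b 2 * (x.v 0 * y.v 1 - x.v 1 * y.v 0)) * h
    · linear_combination (c 0 * (x.v 1 * y.v 2 - x.v 2 * y.v 1) +
        c 1 * (x.v 2 * y.v 0 - x.v 0 * y.v 2) + c 2 * (x.v 0 * y.v 1 - x.v 1 * y.v 0)) * h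
    · ring
    · ring
    · ring
    · linear_combination (-(x.v 0 * y.u 0 + x.v 1 * y.u 1 + x.v 2 * y.u 2)) * h
  · apply ext' <;> simp [tau, one_def, dot, cross]

end Zorn

namespace Zorn

variable {F : Type*} [Field F]

/-- Unipotent automorphism family (short root type). -/
def uMap (w : Fin 3 → F) (x : Zorn F) : Zorn F :=
  ⟨x.x1 - dot w x.u, x.u + cross w x.v,
   x.v + (x.x1 - x.x2 - dot w x.u) • w, x.x2 + dot w x.u⟩

/-- The dual unipotent automorphism family. -/
def upMap (w : Fin 3 → F) (x : Zorn F) : Zorn F :=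
  ⟨x.x1 - dot w x.v, x.u + (x.x1 - x.x2 - dot w x.v) • w,
   x.v + cross w x.u, x.x2 + dot w x.v⟩

/-- The swap automorphism. -/
def swapMap (x : Zorn F) : Zorn F := ⟨x.x2, -x.v, -x.u, x.x1⟩

lemma isAlgAut_uMap (w : Fin 3 → F) : IsAlgAut (uMap w) := by
  refine ⟨Function.bijective_iff_has_inverse.mpr
      ⟨uMap (-w), fun x => ?_, fun x => ?_⟩, fun x y => ?_, fun r x => ?_,
      fun x y => ?_, ?_⟩ <;>
    apply ext' <;>
      simp only [uMap, mul_def, one_def, add_def, smul_def, dot, cross, vec3_0, vec3_1, vec3_2,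
        Pi.add_apply, Pi.sub_apply, Pi.smul_apply, Pi.neg_apply, Pi.zero_apply,
        smul_eq_mul, mul_zero, mul_one] <;>
    ring

lemma isAlgAut_upMap (w : Fin 3 → F) : IsAlgAut (upMap w) := by
  refine ⟨Function.bijective_iff_has_inverse.mpr
      ⟨upMap (-w), fun x => ?_, fun x => ?_⟩, fun x y => ?_, fun r x => ?_,
      fun x y => ?_, ?_⟩ <;>
    apply ext' <;>
      simp only [upMap, mul_def, one_def, add_def, smul_def, dot, cross, vec3_0, vec3_1, vec3_2,
        Pi.add_apply, Pi.sub_apply, Pi.smul_apply, Pi.neg_apply, Pi.zero_apply,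
        smul_eq_mul, mul_zero, mul_one] <;>
    ring

lemma isAlgAut_swapMap : IsAlgAut (swapMap : Zorn F → Zorn F) := by
  refine ⟨Function.bijective_iff_has_inverse.mpr
      ⟨swapMap, fun x => ?_, fun x => ?_⟩, fun x y => ?_, fun r x => ?_,
      fun x y => ?_, ?_⟩ <;>
    apply ext' <;>
      simp only [swapMap, mul_def, one_def, add_def, smul_def, dot, cross, vec3_0, vec3_1, vec3_2,
        Pi.add_apply, Pi.sub_apply, Pi.smul_apply, Pi.neg_apply, Pi.zero_apply,
        smul_eq_mul, mul_zero, mul_one] <;>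
    ring

lemma isAlgAut_id : IsAlgAut (id : Zorn F → Zorn F) :=
  ⟨Function.bijective_id, fun _ _ => rfl, fun _ _ => rfl, fun _ _ => rfl, rfl⟩

lemma IsAlgAut.comp {g f : Zorn F → Zorn F} (hg : IsAlgAut g) (hf : IsAlgAut f) :
    IsAlgAut (g ∘ f) := by
  obtain ⟨hgb, hga, hgs, hgm, hg1⟩ := hg
  obtain ⟨hfb, hfa, hfs, hfm, hf1⟩ := hf
  refine ⟨hgb.comp hfb, fun a b => ?_, fun c a => ?_, fun a b => ?_, ?_⟩ <;>
    simp only [Function.comp_apply]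
  · rw [hfa, hga]
  · rw [hfs, hgs]
  · rw [hfm, hgm]
  · rw [hf1, hg1]

lemma IsAlgAut.inv {g : Zorn F → Zorn F} (hg : IsAlgAut g) :
    ∃ g' : Zorn F → Zorn F, IsAlgAut g' ∧ ∀ x, g' (g x) = x ∧ g (g' x) = x := by
  obtain ⟨hgb, hga, hgs, hgm, hg1⟩ := hg
  obtain ⟨g', hl, hr⟩ := Function.bijective_iff_has_inverse.mp hgb
  have key : ∀ x, g (g' x) = x := hr
  refine ⟨g', ⟨Function.bijective_iff_has_inverse.mpr ⟨g, hr, hl⟩, fun a b => ?_,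
    fun c a => ?_, fun a b => ?_, ?_⟩, fun x => ⟨hl x, hr x⟩⟩
  · apply hgb.1; rw [hr, hga, hr, hr]
  · apply hgb.1; rw [hr, hgs, hr]
  · apply hgb.1; rw [hr, hgm, hr, hr]
  · apply hgb.1; rw [hr, hg1]

lemma mem_orbit_self (x : Zorn F) : x ∈ orbit x := ⟨id, isAlgAut_id, rfl⟩

lemma mem_orbit_aut {g : Zorn F → Zorn F} (hg : IsAlgAut g) (x : Zorn F) :
    g x ∈ orbit x := ⟨g, hg, rfl⟩

lemma orbit_symm {x y : Zorn F} (h : x ∈ orbit y) : y ∈ orbit x := by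
  obtain ⟨g, hg, rfl⟩ := h
  obtain ⟨g', hg', hgg⟩ := hg.inv
  exact ⟨g', hg', (hgg y).1⟩

lemma orbit_trans {x y z : Zorn F} (hxy : x ∈ orbit y) (hyz : y ∈ orbit z) :
    x ∈ orbit z := by
  obtain ⟨g, hg, rfl⟩ := hxy
  obtain ⟨f, hf, rfl⟩ := hyz
  exact ⟨g ∘ f, hg.comp hf, rfl⟩

lemma cmat_mul_self (α β : F) :
    cmat α β * cmat α β = α • cmat α β + β • (1 : Zorn F) := by
  apply ext' <;>
    simp only [cmat, mul_def, one_def, add_def, smul_def, dot, cross, vec3_0, vec3_1, vec3_2,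
      Pi.add_apply, Pi.sub_apply, Pi.smul_apply, Pi.zero_apply, smul_eq_mul] <;>
  ring

lemma orbit_cmat_inj {α β α' β' : F} (h : cmat α' β' ∈ orbit (cmat α β)) :
    α = α' ∧ β = β' := by
  obtain ⟨g, hg, hgc⟩ := h
  have h1 : g (cmat α β * cmat α β) = g (cmat α β) * g (cmat α β) := hg.2.2.2.1 _ _
  rw [cmat_mul_self, hgc] at h1
  have h2 : g (α • cmat α β + β • 1) = α • cmat α' β' + β • 1 := by
    rw [hg.2.1, hg.2.2.1, hgc, hg.2.2.1, hg.2.2.2.2]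
  rw [h2, cmat_mul_self] at h1
  have hv := congrArg (fun z => z.v 0) h1
  have hx := congrArg (fun z => z.x1) h1
  simp only [cmat, add_def, smul_def, one_def, Pi.add_apply, Pi.smul_apply, Pi.zero_apply,
    vec3_0, smul_eq_mul, mul_zero, mul_one, add_zero] at hv hx
  constructor
  · linear_combination hv
  · linear_combination hx - α' * hv

lemma orbit_scalar {x : Zorn F} {γ : F} (h : x ∈ orbit (γ • (1 : Zorn F))) :
    x = γ • (1 : Zorn F) := by
  obtain ⟨g, hg, rfl⟩ := h
  rw [hg.2.2.1, hg.2.2.2.2]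

lemma cmat_ne_scalar (α β γ : F) : cmat α β ≠ γ • (1 : Zorn F) := by
  intro h
  have := congrArg (fun z => z.v 0) h
  simp [cmat, smul_def, one_def] at this

end Zorn

namespace Zorn

variable {F : Type*} [Field F]

lemma scalar_notin_orbit_cmat (γ α β : F) : (γ • 1 : Zorn F) ∉ orbit (cmat α β) := by
  rintro ⟨g, hg, hgc⟩
  have h2 : g (γ • 1) = γ • (1 : Zorn F) := by rw [hg.2.2.1, hg.2.2.2.2]
  exact cmat_ne_scalar α β γ (hg.1.1 (hgc.trans h2.symm))

lemma stepB (α : F) : (⟨α, ![0,1,0], ![1,0,0], 0⟩ : Zorn F) ∈ orbit (cmat α 0) := by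
  apply orbit_symm
  have hdet : dot ![(1:F),0,-α] (cross ![0,1,0] ![0,0,1]) = 1 := by
    simp [dot, cross]
  refine ⟨tau ![1,0,-α] ![0,1,0] ![0,0,1] ∘ uMap ![0,0,-1],
    (isAlgAut_tau _ _ _ hdet).comp (isAlgAut_uMap _), ?_⟩
  apply ext' <;>
    simp only [Function.comp_apply, tau, uMap, cmat, dot, cross, vec3_0, vec3_1, vec3_2,
      Pi.add_apply, Pi.sub_apply, Pi.smul_apply, smul_eq_mul] <;>
  ring

lemma step4 (x : Zorn F) (hv : x.v = ![1,0,0]) (h2 : x.x2 = 0) :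
    ∃ α β, x ∈ orbit (cmat α β) := by
  by_cases h0 : x.u 0 = 0
  · by_cases hu1 : x.u 1 = 0
    · by_cases hu2 : x.u 2 = 0
      · refine ⟨x.x1, 0, ?_⟩
        have hx : x = cmat x.x1 0 := by
          apply ext' <;> simp [cmat, hv, h0, hu1, hu2, h2]
        rw [← hx]
        exact mem_orbit_self x
      · -- x.u 2 ≠ 0
        have hdet : dot ![(1:F),0,0] (cross ![0,0,(x.u 2)⁻¹] ![0,-(x.u 2),0]) = 1 := by
          simp [dot, cross]
          field_simp
        have himg : tau ![1,0,0] ![0,0,(x.u 2)⁻¹] ![0,-(x.u 2),0] x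
            = ⟨x.x1, ![0,1,0], ![1,0,0], 0⟩ := by
          apply ext' <;>
            simp only [tau, dot, cross, hv, h2, vec3_0, vec3_1, vec3_2, h0, hu1] <;>
          field_simp <;> ring
        refine ⟨x.x1, 0, orbit_trans (orbit_symm ?_) (stepB x.x1)⟩
        rw [← himg]
        exact mem_orbit_aut (isAlgAut_tau _ _ _ hdet) x
    · -- x.u 1 ≠ 0
      have hdet : dot ![(1:F),0,0] (cross ![0,(x.u 1)⁻¹,0] ![0,-(x.u 2),x.u 1]) = 1 := by
        simp [dot, cross]
        field_simp
      have himg : tau ![1,0,0] ![0,(x.u 1)⁻¹,0] ![0,-(x.u 2),x.u 1] x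
          = ⟨x.x1, ![0,1,0], ![1,0,0], 0⟩ := by
        apply ext' <;>
          simp only [tau, dot, cross, hv, h2, vec3_0, vec3_1, vec3_2, h0] <;>
        field_simp <;> ring
      refine ⟨x.x1, 0, orbit_trans (orbit_symm ?_) (stepB x.x1)⟩
      rw [← himg]
      exact mem_orbit_aut (isAlgAut_tau _ _ _ hdet) x
  · -- x.u 0 ≠ 0
    have hdet : dot ![(1:F),0,0]
        (cross ![-(x.u 1)*((x.u 0)⁻¹*(x.u 0)⁻¹),(x.u 0)⁻¹,0] ![-(x.u 2),0,x.u 0]) = 1 := by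
      simp [dot, cross]
      field_simp
    have himg : tau ![1,0,0] ![-(x.u 1)*((x.u 0)⁻¹*(x.u 0)⁻¹),(x.u 0)⁻¹,0] ![-(x.u 2),0,x.u 0] x
        = cmat x.x1 (x.u 0) := by
      apply ext' <;>
        simp only [cmat, tau, dot, cross, hv, h2, vec3_0, vec3_1, vec3_2] <;>
      field_simp <;> ring
    refine ⟨x.x1, x.u 0, orbit_symm ?_⟩
    rw [← himg]
    exact mem_orbit_aut (isAlgAut_tau _ _ _ hdet) x

lemma tau_v_e1 (x : Zorn F) (b c : Fin 3 → F) (hdet : dot x.v (cross b c) = 1) :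
    (tau x.v b c x).v = ![1,0,0] := by
  simp only [dot, cross, vec3_0, vec3_1, vec3_2] at hdet
  apply funext3 <;> simp only [tau, dot, cross, vec3_0, vec3_1, vec3_2]
  · linear_combination hdet
  · ring
  · ring

lemma stepW (z : Zorn F) (hv0 : z.v 0 ≠ 0) (h2 : z.x2 = 0) :
    ∃ α β, z ∈ orbit (cmat α β) := by
  have hdet : dot z.v (cross ![0,1,0] ![0,0,(z.v 0)⁻¹]) = 1 := by
    simp [dot, cross]
    field_simp
  obtain ⟨α, β, hy⟩ := step4 _ (tau_v_e1 z _ _ hdet) (by simpa [tau] using h2)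
  exact ⟨α, β, orbit_trans (orbit_symm (mem_orbit_aut (isAlgAut_tau _ _ _ hdet) z)) hy⟩

lemma step3' (y : Zorn F) (hv : y.v = ![1,0,0]) : ∃ α β, y ∈ orbit (cmat α β) := by
  have hz2 : (upMap ![-(y.x2),0,0] y).x2 = 0 := by
    simp [upMap, dot, hv]
  have hzv : (upMap ![-(y.x2),0,0] y).v 0 = 1 := by
    simp [upMap, cross, hv]
  obtain ⟨α, β, hy⟩ := stepW _ (by rw [hzv]; exact one_ne_zero) hz2
  exact ⟨α, β, orbit_trans (orbit_symm (mem_orbit_aut (isAlgAut_upMap _) y)) hy⟩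

lemma stepTau (x : Zorn F) (b c : Fin 3 → F) (hdet : dot x.v (cross b c) = 1) :
    ∃ α β, x ∈ orbit (cmat α β) := by
  obtain ⟨α, β, hy⟩ := step3' (tau x.v b c x) (tau_v_e1 x b c hdet)
  exact ⟨α, β, orbit_trans (orbit_symm (mem_orbit_aut (isAlgAut_tau _ _ _ hdet) x)) hy⟩

lemma stepV (x : Zorn F) (hv : x.v ≠ 0) : ∃ α β, x ∈ orbit (cmat α β) := by
  have hcase : x.v 0 ≠ 0 ∨ x.v 1 ≠ 0 ∨ x.v 2 ≠ 0 := by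
    by_contra h
    push_neg at h
    exact hv (funext3 h.1 h.2.1 h.2.2)
  rcases hcase with h | h | h
  · exact stepTau x ![0,1,0] ![0,0,(x.v 0)⁻¹] (by simp [dot, cross]; field_simp)
  · exact stepTau x ![0,0,1] ![(x.v 1)⁻¹,0,0] (by simp [dot, cross]; field_simp)
  · exact stepTau x ![1,0,0] ![0,(x.v 2)⁻¹,0] (by simp [dot, cross]; field_simp)

lemma main_exists (x : Zorn F) (h : ¬(x.u = 0 ∧ x.v = 0 ∧ x.x1 = x.x2)) :
    ∃ α β, x ∈ orbit (cmat α β) := by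
  by_cases hv : x.v = 0
  · by_cases hu : x.u = 0
    · have h12 : x.x1 ≠ x.x2 := fun h' => h ⟨hu, hv, h'⟩
      have hyv : (uMap ![1,0,0] x).v 0 = x.x1 - x.x2 := by
        simp [uMap, dot, cross, hu, hv]
      have hyv' : (uMap ![1,0,0] x).v ≠ 0 := by
        intro h'
        apply h12
        have := congrFun h' 0
        rw [hyv] at this
        simpa [sub_eq_zero] using this
      obtain ⟨α, β, hy⟩ := stepV _ hyv'
      exact ⟨α, β, orbit_trans (orbit_symm (mem_orbit_aut (isAlgAut_uMap _) x)) hy⟩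
    · have hyv : (swapMap x).v ≠ 0 := by
        intro h'
        apply hu
        have : -x.u = 0 := h'
        simpa using this
      obtain ⟨α, β, hy⟩ := stepV _ hyv
      exact ⟨α, β, orbit_trans (orbit_symm (mem_orbit_aut isAlgAut_swapMap x)) hy⟩
  · exact stepV x hv

end Zorn

/-- the split octonions are the disjoint union of the `Aut(O)`-orbits of the
elements `α·1` (`α ∈ F`) and `c(α,β)` (`α, β ∈ F`): every element lies in the orbit of
exactly one element of this list. -/
theorem zorn_orbit_classification {F : Type*} [Field F] (x : Zorn F) :
    ∃! r : F ⊕ F × F,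
      x ∈ Zorn.orbit (Sum.elim (fun α => α • (1 : Zorn F)) (fun p => Zorn.cmat p.1 p.2) r) := by
  by_cases hsc : x.u = 0 ∧ x.v = 0 ∧ x.x1 = x.x2
  · -- scalar case
    have hx : x = x.x1 • (1 : Zorn F) := by
      apply Zorn.ext' <;> simp [Zorn.one_def, hsc.1, hsc.2.1, hsc.2.2]
    refine ⟨Sum.inl x.x1, ?_, ?_⟩
    · simp only [Sum.elim_inl]
      rw [← hx]
      exact Zorn.mem_orbit_self x
    · rintro (γ | ⟨α, β⟩) hr
      · simp only [Sum.elim_inl] at hr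
        have h1 : x = γ • (1 : Zorn F) := Zorn.orbit_scalar hr
        have h2 := congrArg Zorn.x1 (hx.symm.trans h1)
        simp only [Zorn.smul_def, Zorn.one_def, mul_one] at h2
        simp [h2]
      · exfalso
        simp only [Sum.elim_inr] at hr
        rw [hx] at hr
        exact Zorn.scalar_notin_orbit_cmat _ _ _ hr
  · obtain ⟨α, β, hmem⟩ := Zorn.main_exists x hsc
    refine ⟨Sum.inr (α, β), hmem, ?_⟩
    rintro (γ | ⟨α', β'⟩) hr
    · exfalso
      simp only [Sum.elim_inl] at hr
      have h1 : x = γ • (1 : Zorn F) := Zorn.orbit_scalar hr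
      rw [h1] at hmem
      exact Zorn.scalar_notin_orbit_cmat _ _ _ hmem
    · simp only [Sum.elim_inr] at hr
      have h2 : Zorn.cmat α' β' ∈ Zorn.orbit (Zorn.cmat α β) :=
        Zorn.orbit_trans (Zorn.orbit_symm hr) hmem
      obtain ⟨hα, hβ⟩ := Zorn.orbit_cmat_inj h2
      simp [hα, hβ]
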